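/- Let n ≥ 1, d ≥ 2 be integers. Then the subgroup d·Σ(n,d) = {d·a : a ∈ Σ(n,d)} of the sand dune group Σ(n,d) is isomorphic to Σ(n/gcd(n,d), d). -/

import Mathlib

open Polynomial Matrix

noncomputable section

/-- `Rq n` is the ring `ℤ[x]/(x^n - 1)`. -/
abbrev Rq (n : ℕ) : Type := Polynomial ℤ ⧸ Ideal.span ({X ^ n - 1} : Set (Polynomial ℤ))

/-- Projection `ℤ[x] → ℤ[x]/(x^n-1)`. -/
def mkR (n : ℕ) : Polynomial ℤ →ₐ[ℤ] Rq n := Ideal.Quotient.mkₐ ℤ _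

/-- Evaluation at 1, `ℤ[x]/(x^n-1) → ℤ`. -/
def evalOne (n : ℕ) : Rq n →ₐ[ℤ] ℤ :=
  Ideal.Quotient.liftₐ _ (aeval (1 : ℤ)) (by
    intro a ha
    have h : Ideal.span ({X ^ n - 1} : Set (Polynomial ℤ)) ≤
        RingHom.ker (aeval (1 : ℤ) : Polynomial ℤ →ₐ[ℤ] ℤ) := by
      rw [Ideal.span_le]
      rintro b ⟨rfl⟩
      simp [RingHom.mem_ker]
    exact h ha)

/-- `𝒵_n`, the ℤ-submodule of elements of `ℤ[x]/(x^n-1)` vanishing at 1. -/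
def Znd (n : ℕ) : Submodule ℤ (Rq n) := LinearMap.ker (evalOne n).toLinearMap

/-- `e_v = x^v - 1`. -/
def eR (n : ℕ) (v : ZMod n) : Rq n := mkR n (X ^ v.val - 1)

lemma eR_mem (n : ℕ) (v : ZMod n) : eR n v ∈ Znd n := by
  rw [Znd, LinearMap.mem_ker]
  change aeval (1 : ℤ) (X ^ v.val - 1 : Polynomial ℤ) = 0
  simp

/-- `e_v` as an element of `𝒵_n`. -/
def eZ (n : ℕ) (v : ZMod n) : Znd n := ⟨eR n v, eR_mem n v⟩

/-- `ε_v = d·e_v − e_{d·v}`. -/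
def epsR (n d : ℕ) (v : ZMod n) : Rq n := (d : ℤ) • eR n v - eR n ((d : ZMod n) * v)

/-- `ℰ_{n,d}`: the ℤ-submodule generated by the `ε_v`, `v ≠ 0`. -/
def Esub (n d : ℕ) : Submodule ℤ (Rq n) :=
  Submodule.span ℤ {x | ∃ v : ZMod n, v ≠ 0 ∧ x = epsR n d v}

/-- The sand dune group `Σ(n,d) = 𝒵_n / ℰ_{n,d}` of `DB(n,d)`. -/
abbrev SigmaGrp (n d : ℕ) : Type :=
  Znd n ⧸ (Esub n d).comap (Znd n).subtype

/-- Projection `𝒵_n → Σ(n,d)`. -/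
def sigmaMk (n d : ℕ) (a : Znd n) : SigmaGrp n d := Submodule.Quotient.mk a

/-- `f_v = d·x^v − x^{d·v}(1 + x + ⋯ + x^{d−1})`. -/
def fR (n d : ℕ) (v : ZMod n) : Rq n :=
  mkR n ((d : Polynomial ℤ) * X ^ v.val -
    X ^ (((d : ZMod n) * v).val) * (∑ i ∈ Finset.range d, X ^ i))

/-- The `R`-span of the `f_v`, `v ≠ 0`, where `R = ℤ[x]/(x^n-1)`. -/
def Fsub (n d : ℕ) : Submodule (Rq n) (Rq n) :=
  Submodule.span (Rq n) {x | ∃ v : ZMod n, v ≠ 0 ∧ x = fR n d v}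

/-- The sandpile (critical) group `S(n,d)` of the generalized de Bruijn graph `DB(n,d)`:
the quotient of `𝒵_n` by the `R`-span of the `f_v`, `v ≠ 0`. -/
abbrev SGrp (n d : ℕ) : Type :=
  Znd n ⧸ ((Fsub n d).restrictScalars ℤ).comap (Znd n).subtype

namespace SandDune

lemma monicXn (n : ℕ) (hn : 1 ≤ n) : (X ^ n - 1 : Polynomial ℤ).Monic := by
  simpa using Polynomial.monic_X_pow_sub_C (1 : ℤ) (by omega)

lemma mk_pow_self (n : ℕ) (hn : 1 ≤ n) : mkR n (X ^ n) = 1 := by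
  have h0 : mkR n (X ^ n - 1) = 0 := by
    simp [mkR, Ideal.Quotient.mkₐ_eq_mk, Ideal.Quotient.eq_zero_iff_mem,
      Ideal.mem_span_singleton]
  have := sub_eq_zero.mp (by simpa [map_sub] using h0)
  simpa using this

lemma mkX_mod (n : ℕ) (hn : 1 ≤ n) (i : ℕ) : mkR n (X ^ i) = mkR n (X ^ (i % n)) := by
  conv_lhs => rw [show i = n * (i / n) + i % n from (Nat.div_add_mod i n).symm]
  rw [pow_add, pow_mul, _root_.map_mul, map_pow, mk_pow_self n hn, one_pow, one_mul]

lemma mkX_congr (n : ℕ) (hn : 1 ≤ n) {i j : ℕ} (h : i % n = j % n) :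
    mkR n (X ^ i) = mkR n (X ^ j) := by
  rw [mkX_mod n hn i, mkX_mod n hn j, h]

lemma eR_eq (n : ℕ) (v : ZMod n) : eR n v = mkR n (X ^ v.val) - 1 := by
  simp [eR, map_sub]

lemma eR_natCast (n : ℕ) (hn : 1 ≤ n) (i : ℕ) :
    eR n ((i : ZMod n)) = mkR n (X ^ i) - 1 := by
  haveI : NeZero n := ⟨by omega⟩
  rw [eR_eq, ZMod.val_natCast, ← mkX_mod n hn]

lemma eR_zero (n : ℕ) : eR n 0 = 0 := by
  simp [eR_eq, ZMod.val_zero]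

lemma epsR_zero (n d : ℕ) : epsR n d 0 = 0 := by
  simp [epsR, eR_zero]

/-- The power basis of `Rq n`. -/
def pb (n : ℕ) (hn : 1 ≤ n) : PowerBasis ℤ (Rq n) :=
  AdjoinRoot.powerBasis' (monicXn n hn)

lemma pb_dim (n : ℕ) (hn : 1 ≤ n) : (pb n hn).dim = n := by
  simp [pb, AdjoinRoot.powerBasis'_dim]
  have : ((1:Polynomial ℤ) = C 1) := by simp
  rw [this, Polynomial.natDegree_X_pow_sub_C]

lemma pb_basis (n : ℕ) (hn : 1 ≤ n) (i : Fin (pb n hn).dim) :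
    (pb n hn).basis i = mkR n (X ^ (i : ℕ)) := by
  rw [(pb n hn).basis_eq_pow]
  have : (pb n hn).gen = mkR n X := rfl
  rw [this, ← map_pow]

end SandDune
namespace SandDune

/-- Coefficient functional on `Rq n`. -/
def coefL (n : ℕ) (hn : 1 ≤ n) (u : Fin n) : Rq n →ₗ[ℤ] ℤ :=
  (Finsupp.lapply (Fin.cast (pb_dim n hn).symm u)).comp
    ((pb n hn).basis.repr : Rq n →ₗ[ℤ] (Fin (pb n hn).dim →₀ ℤ))

lemma coefL_mkX (n : ℕ) (hn : 1 ≤ n) (u : Fin n) (j : ℕ) :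
    coefL n hn u (mkR n (X ^ j)) = if (u : ℕ) = j % n then 1 else 0 := by
  have hj : j % n < (pb n hn).dim := by rw [pb_dim]; exact Nat.mod_lt _ (by omega)
  have hb : mkR n (X ^ j) = (pb n hn).basis ⟨j % n, hj⟩ := by
    rw [pb_basis]; exact mkX_mod n hn j
  rw [hb]
  simp only [coefL, LinearMap.comp_apply, LinearEquiv.coe_coe, Module.Basis.repr_self,
    Finsupp.lapply_apply]
  rw [Finsupp.single_apply]
  congr 1
  simp [Fin.ext_iff, eq_comm]

lemma coefL_one (n : ℕ) (hn : 1 ≤ n) (u : Fin n) :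
    coefL n hn u 1 = if (u : ℕ) = 0 then 1 else 0 := by
  have : (1 : Rq n) = mkR n (X ^ 0) := by simp
  rw [this, coefL_mkX]
  simp [Nat.zero_mod]
  rfl

/-- The embedding `Rq n' → Rq n`, `x ↦ x^g`, when `g * n' = n`. -/
def Phi (n n' g : ℕ) (hn : 1 ≤ n) (hgn : g * n' = n) : Rq n' →ₐ[ℤ] Rq n :=
  Ideal.Quotient.liftₐ _ (aeval (mkR n (X ^ g))) (by
    intro a ha
    have h : Ideal.span ({X ^ n' - 1} : Set (Polynomial ℤ)) ≤
        RingHom.ker (aeval (mkR n (X ^ g)) : Polynomial ℤ →ₐ[ℤ] Rq n) := by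
      rw [Ideal.span_le]
      rintro b ⟨rfl⟩
      simp only [SetLike.mem_coe, RingHom.mem_ker, map_sub, map_pow, aeval_X, _root_.map_one]
      rw [← pow_mul, hgn, ← _root_.map_pow (mkR n) X n, mk_pow_self n hn, sub_self]
    exact h ha)

lemma Phi_mk (n n' g : ℕ) (hn : 1 ≤ n) (hgn : g * n' = n) (p : Polynomial ℤ) :
    Phi n n' g hn hgn (mkR n' p) = aeval (mkR n (X ^ g)) p := by
  change aeval (mkR n (X ^ g)) p = _
  simp [Phi, mkR, Ideal.Quotient.liftₐ_apply, Ideal.Quotient.mkₐ_eq_mk]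

lemma Phi_mkX (n n' g : ℕ) (hn : 1 ≤ n) (hgn : g * n' = n) (j : ℕ) :
    Phi n n' g hn hgn (mkR n' (X ^ j)) = mkR n (X ^ (g * j)) := by
  rw [Phi_mk, _root_.map_pow, aeval_X, ← _root_.map_pow, ← pow_mul]

lemma coefL_Phi (n n' g : ℕ) (hn : 1 ≤ n) (hn' : 1 ≤ n') (hgn : g * n' = n)
    (u : Fin n) (hu : ¬ g ∣ (u : ℕ)) (z : Rq n') :
    coefL n hn u (Phi n n' g hn hgn z) = 0 := by
  have key : (coefL n hn u).comp (Phi n n' g hn hgn).toLinearMap = 0 := by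
    apply (pb n' hn').basis.ext
    intro j
    rw [pb_basis]
    simp only [LinearMap.comp_apply, AlgHom.toLinearMap_apply, LinearMap.zero_apply]
    rw [Phi_mkX, coefL_mkX]
    rw [if_neg]
    intro h
    apply hu
    rw [h]
    exact (Nat.dvd_mod_iff ⟨n', hgn.symm⟩).mpr ⟨j, rfl⟩
  exact LinearMap.congr_fun key z

lemma Phi_injective (n n' g : ℕ) (hn : 1 ≤ n) (hn' : 1 ≤ n') (hg : 1 ≤ g)
    (hgn : g * n' = n) : Function.Injective (Phi n n' g hn hgn) := by
  set r : Rq n →ₗ[ℤ] Rq n' := (pb n hn).basis.constr ℤ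
    (fun i => if g ∣ ((i : Fin (pb n hn).dim) : ℕ) then mkR n' (X ^ (((i : Fin _) : ℕ) / g)) else 0)
    with hr
  have hretr : ∀ z, r (Phi n n' g hn hgn z) = z := by
    have key : r.comp (Phi n n' g hn hgn).toLinearMap = LinearMap.id := by
      apply (pb n' hn').basis.ext
      intro j
      rw [pb_basis]
      simp only [LinearMap.comp_apply, AlgHom.toLinearMap_apply, LinearMap.id_apply]
      rw [Phi_mkX]
      have hjn' : (j : ℕ) < n' := lt_of_lt_of_eq j.2 (pb_dim n' hn')
      have hlt : g * (j : ℕ) < n := by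
        calc g * (j : ℕ) < g * n' := mul_lt_mul_of_pos_left hjn' (by omega : 0 < g)
        _ = n := hgn
      set i0 : Fin (pb n hn).dim := Fin.cast (pb_dim n hn).symm ⟨g * (j : ℕ), hlt⟩ with hi0
      have hi0v : (i0 : ℕ) = g * (j : ℕ) := rfl
      have hb : mkR n (X ^ (g * (j : ℕ))) = (pb n hn).basis i0 := by
        rw [pb_basis n hn i0, hi0v]
      rw [hb, hr, Module.Basis.constr_basis, hi0v, if_pos ⟨(j : ℕ), rfl⟩,
        Nat.mul_div_cancel_left _ (by omega : 0 < g), ← pb_basis n' hn' j]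
    intro z
    exact LinearMap.congr_fun key z
  intro a b hab
  have := hretr a
  rw [hab, hretr b] at this
  exact this.symm

end SandDune
namespace SandDune

lemma epsR_mem (n d : ℕ) (v : ZMod n) : epsR n d v ∈ Esub n d := by
  by_cases h : v = 0
  · rw [h, epsR_zero]; exact zero_mem _
  · exact Submodule.subset_span ⟨v, h, rfl⟩

lemma Esub_eq (n d : ℕ) :
    Esub n d = LinearMap.range (Finsupp.linearCombination ℤ (epsR n d)) := by
  rw [Finsupp.range_linearCombination]
  apply le_antisymm
  · apply Submodule.span_mono
    rintro x ⟨v, -, rfl⟩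
    exact ⟨v, rfl⟩
  · rw [Submodule.span_le]
    rintro x ⟨v, rfl⟩
    exact epsR_mem n d v

lemma coefL_eR (n : ℕ) (hn : 1 ≤ n) (u : Fin n) (hu : (u : ℕ) ≠ 0) (w : ZMod n) :
    coefL n hn u (eR n w) = if (u : ℕ) = w.val then 1 else 0 := by
  haveI : NeZero n := ⟨by omega⟩
  rw [eR_eq, map_sub, coefL_mkX, coefL_one, Nat.mod_eq_of_lt (ZMod.val_lt w),
    if_neg hu, sub_zero]

lemma val_dmul (n d g : ℕ) (hn : 1 ≤ n) (hgd : g ∣ d) (hgn : g ∣ n) (v : ZMod n) :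
    g ∣ ((d : ZMod n) * v).val := by
  haveI : NeZero n := ⟨by omega⟩
  have hv : (((v.val : ℕ)) : ZMod n) = v := ZMod.natCast_rightInverse v
  have h1 : (d : ZMod n) * v = ((d * v.val : ℕ) : ZMod n) := by
    rw [← hv, ← Nat.cast_mul, hv]
  rw [h1, ZMod.val_natCast]
  exact (Nat.dvd_mod_iff hgn).mpr (hgd.mul_right _)

lemma coefL_eps (n d g : ℕ) (hn : 1 ≤ n) (hgd : g ∣ d) (hgn : g ∣ n)
    (u : Fin n) (hu : ¬ g ∣ (u : ℕ)) (v : ZMod n) :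
    coefL n hn u (epsR n d v) = if (u : ℕ) = v.val then (d : ℤ) else 0 := by
  haveI : NeZero n := ⟨by omega⟩
  have hu0 : (u : ℕ) ≠ 0 := fun h => hu (h ▸ dvd_zero g)
  have h2 : coefL n hn u (eR n ((d : ZMod n) * v)) = 0 := by
    rw [coefL_eR n hn u hu0, if_neg]
    intro h
    exact hu (h ▸ val_dmul n d g hn hgd hgn v)
  rw [epsR, map_sub, _root_.map_smul, h2, sub_zero, coefL_eR n hn u hu0]
  simp only [smul_eq_mul, mul_ite, mul_one, mul_zero]

lemma Phi_eR_cast (n n' g : ℕ) (hn : 1 ≤ n) (hn' : 1 ≤ n') (hgn : g * n' = n) (i : ℕ) :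
    Phi n n' g hn hgn (eR n' ((i : ZMod n'))) = eR n (((g * i : ℕ) : ZMod n)) := by
  rw [eR_natCast n' hn' i, map_sub, _root_.map_one, Phi_mkX, ← eR_natCast n hn (g * i)]

lemma Phi_eps_cast (n n' g d : ℕ) (hn : 1 ≤ n) (hn' : 1 ≤ n') (hgn : g * n' = n) (i : ℕ) :
    Phi n n' g hn hgn (epsR n' d ((i : ZMod n'))) = epsR n d (((g * i : ℕ) : ZMod n)) := by
  have h1 : (d : ZMod n') * ((i : ℕ) : ZMod n') = ((d * i : ℕ) : ZMod n') := by push_cast; ring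
  have h2 : (d : ZMod n) * ((g * i : ℕ) : ZMod n) = ((g * (d * i) : ℕ) : ZMod n) := by
    push_cast; ring
  rw [epsR, epsR, map_sub, map_zsmul, h1, h2, Phi_eR_cast n n' g hn hn' hgn, Phi_eR_cast n n' g hn hn' hgn]

lemma Phi_eps (n n' g d : ℕ) (hn : 1 ≤ n) (hn' : 1 ≤ n') (hgn : g * n' = n) (w : ZMod n') :
    Phi n n' g hn hgn (epsR n' d w) = epsR n d (((g * w.val : ℕ) : ZMod n)) := by
  haveI : NeZero n' := ⟨by omega⟩
  have hw : (((w.val : ℕ)) : ZMod n') = w := ZMod.natCast_rightInverse w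
  rw [← hw, Phi_eps_cast n n' g d hn hn' hgn, hw]

lemma preimage_Esub (n n' g d : ℕ) (hn : 1 ≤ n) (hn' : 1 ≤ n') (hg : 1 ≤ g) (hd : 1 ≤ d)
    (hgn : g * n' = n) (hgd : g ∣ d) (z : Rq n')
    (hz : Phi n n' g hn hgn z ∈ Esub n d) : z ∈ Esub n' d := by
  haveI : NeZero n := ⟨by omega⟩
  haveI : NeZero n' := ⟨by omega⟩
  rw [Esub_eq] at hz ⊢
  obtain ⟨c, hc⟩ := hz
  have hsup : ∀ v : ZMod n, ¬ g ∣ v.val → c v = 0 := by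
    intro v hv
    set u : Fin n := ⟨v.val, ZMod.val_lt v⟩ with hu
    have h0 : coefL n hn u (Phi n n' g hn hgn z) = 0 := coefL_Phi n n' g hn hn' hgn u hv z
    rw [← hc, Finsupp.linearCombination_apply, map_finsuppSum] at h0
    have heq : ∀ w : ZMod n, (c w) • (coefL n hn u (epsR n d w)) =
        (if w = v then c w * d else 0) := by
      intro w
      rw [coefL_eps n d g hn hgd ⟨n', hgn.symm⟩ u hv w]
      simp only [smul_eq_mul, mul_ite, mul_zero]
      congr 1
      have hiff : ((u : ℕ) = w.val) ↔ (w = v) := by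
        constructor
        · intro h
          have hval : w.val = v.val := h.symm
          have h3 := congrArg (fun t : ℕ => ((t : ℕ) : ZMod n)) hval
          simpa [ZMod.natCast_rightInverse w, ZMod.natCast_rightInverse v] using h3
        · intro h; rw [h]
      simp [hiff]
    have h1 : (c.sum fun w a => a • coefL n hn u (epsR n d w)) = c v * d := by
      have e1 : (c.sum fun w a => a • coefL n hn u (epsR n d w)) =
          c.sum (fun w a => if w = v then a * (d : ℤ) else 0) :=
        Finsupp.sum_congr (fun w _ => heq w)
      rw [e1, Finsupp.sum_ite_eq' c v (fun w a => a * (d : ℤ))]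
      by_cases hm : v ∈ c.support
      · rw [if_pos hm]
      · rw [if_neg hm, Finsupp.notMem_support_iff.mp hm, zero_mul]
    have h2 : (c.sum fun w a => coefL n hn u (a • epsR n d w)) =
        (c.sum fun w a => a • coefL n hn u (epsR n d w)) :=
      Finsupp.sum_congr fun w _ => by rw [_root_.map_smul]
    rw [h2, h1] at h0
    have hdz : (d : ℤ) ≠ 0 := by exact_mod_cast (by omega : d ≠ 0)
    exact mul_eq_zero.mp h0 |>.resolve_right hdz
  set ι : ZMod n' → ZMod n := fun w => ((g * w.val : ℕ) : ZMod n) with hι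
  have hιinj : Function.Injective ι := by
    intro w1 w2 h
    have h1 : (g * w1.val) % n = (g * w2.val) % n :=
      (ZMod.natCast_eq_natCast_iff _ _ _).mp h
    have l1 : g * w1.val < n := hgn ▸ mul_lt_mul_of_pos_left (ZMod.val_lt w1) (by omega : 0 < g)
    have l2 : g * w2.val < n := hgn ▸ mul_lt_mul_of_pos_left (ZMod.val_lt w2) (by omega : 0 < g)
    rw [Nat.mod_eq_of_lt l1, Nat.mod_eq_of_lt l2] at h1
    have hval : w1.val = w2.val := Nat.eq_of_mul_eq_mul_left (by omega) h1
    have := congrArg (fun t : ℕ => ((t : ℕ) : ZMod n')) hval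
    simpa [ZMod.natCast_rightInverse w1, ZMod.natCast_rightInverse w2] using this
  have hbij : Set.BijOn ι (ι ⁻¹' ↑c.support) ↑c.support := by
    refine ⟨fun x hx => hx, hιinj.injOn, ?_⟩
    intro v hv
    have hgv : g ∣ v.val := by
      by_contra h
      exact absurd (hsup v h) (Finsupp.mem_support_iff.mp hv)
    obtain ⟨k, hk⟩ := hgv
    have hklt : k < n' := by
      have h1 : g * k < g * n' := by rw [← hk, hgn]; exact ZMod.val_lt v
      exact Nat.lt_of_mul_lt_mul_left h1
    have hik : ι ((k : ZMod n')) = v := by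
      show ((g * ((k : ZMod n')).val : ℕ) : ZMod n) = v
      rw [ZMod.val_natCast, Nat.mod_eq_of_lt hklt, ← hk]
      exact ZMod.natCast_rightInverse v
    exact ⟨(k : ZMod n'), by simpa [Set.mem_preimage, hik] using hv, hik⟩
  set c' := Finsupp.comapDomain ι c hbij.injOn with hc'
  have hsum := Finsupp.sum_comapDomain ι c (fun v a => a • epsR n d v) hbij
  refine ⟨c', ?_⟩
  apply Phi_injective n n' g hn hn' hg hgn
  rw [← hc, Finsupp.linearCombination_apply, Finsupp.linearCombination_apply]
  rw [map_finsuppSum, ← hsum]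
  apply Finsupp.sum_congr
  intro w _
  show Phi n n' g hn hgn (c' w • epsR n' d w) = c' w • epsR n d (ι w)
  simp only [hι]
  rw [map_zsmul, Phi_eps n n' g d hn hn' hgn w]

end SandDune
namespace SandDune

lemma Phi_eRw (n n' g : ℕ) (hn : 1 ≤ n) (hn' : 1 ≤ n') (hgn : g * n' = n) (w : ZMod n') :
    Phi n n' g hn hgn (eR n' w) = eR n (((g * w.val : ℕ) : ZMod n)) := by
  haveI : NeZero n' := ⟨by omega⟩
  have hw : (((w.val : ℕ)) : ZMod n') = w := ZMod.natCast_rightInverse w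
  rw [← hw, Phi_eR_cast n n' g hn hn' hgn, hw]

lemma evalOne_mk (n : ℕ) (p : Polynomial ℤ) : evalOne n (mkR n p) = p.eval 1 := by
  change aeval (1 : ℤ) p = p.eval 1
  simp [evalOne, mkR, Ideal.Quotient.mkₐ_eq_mk, Ideal.Quotient.liftₐ_apply,
    Ideal.Quotient.lift_mk, Polynomial.coe_aeval_eq_eval]

lemma evalOne_Phi (n n' g : ℕ) (hn : 1 ≤ n) (hgn : g * n' = n) (z : Rq n') :
    evalOne n (Phi n n' g hn hgn z) = evalOne n' z := by
  obtain ⟨p, rfl⟩ := Ideal.Quotient.mkₐ_surjective ℤ _ z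
  show evalOne n (Phi n n' g hn hgn (mkR n' p)) = evalOne n' (mkR n' p)
  rw [Phi_mk, evalOne_mk]
  have h1 : evalOne n (mkR n (X ^ g)) = 1 := by rw [evalOne_mk]; simp
  rw [← Polynomial.aeval_algHom_apply, h1]
  simp [Polynomial.coe_aeval_eq_eval]

/-- The restriction of `Phi` to `𝒵`. -/
def PhiZ (n n' g : ℕ) (hn : 1 ≤ n) (hgn : g * n' = n) : (Znd n') →ₗ[ℤ] (Znd n) :=
  ((Phi n n' g hn hgn).toLinearMap).restrict (p := Znd n') (q := Znd n) (fun x hx => by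
    have hx' : evalOne n' x = 0 := LinearMap.mem_ker.mp hx
    refine LinearMap.mem_ker.mpr ?_
    show evalOne n (Phi n n' g hn hgn x) = 0
    rw [evalOne_Phi]
    exact hx')

lemma PhiZ_coe (n n' g : ℕ) (hn : 1 ≤ n) (hgn : g * n' = n) (a : Znd n') :
    (PhiZ n n' g hn hgn a : Rq n) = Phi n n' g hn hgn (a : Rq n') := rfl

lemma Phi_Esub_le (n n' g d : ℕ) (hn : 1 ≤ n) (hn' : 1 ≤ n') (hgn : g * n' = n) :
    ∀ x ∈ Esub n' d, Phi n n' g hn hgn x ∈ Esub n d := by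
  intro x hx
  have hle : Esub n' d ≤ (Esub n d).comap (Phi n n' g hn hgn).toLinearMap := by
    rw [Esub, Submodule.span_le]
    rintro y ⟨w, -, rfl⟩
    rw [SetLike.mem_coe, Submodule.mem_comap, AlgHom.toLinearMap_apply,
      Phi_eps n n' g d hn hn' hgn w]
    exact epsR_mem n d _
  exact hle hx

lemma mk_as_sum (n : ℕ) (p : Polynomial ℤ) :
    mkR n p = ∑ i ∈ p.support, p.coeff i • mkR n (X ^ i) := by
  conv_lhs => rw [← Polynomial.sum_C_mul_X_pow_eq p]
  rw [Polynomial.sum, map_sum]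
  apply Finset.sum_congr rfl
  intro i _
  rw [← Polynomial.smul_eq_C_mul, _root_.map_smul]

lemma eval_one_eq_sum (n : ℕ) (p : Polynomial ℤ) : p.eval 1 = ∑ i ∈ p.support, p.coeff i := by
  rw [Polynomial.eval_eq_sum, Polynomial.sum]
  simp

lemma span_eZ (n : ℕ) (hn : 1 ≤ n) :
    Submodule.span ℤ (Set.range (eZ n)) = (⊤ : Submodule ℤ (Znd n)) := by
  rw [eq_top_iff]
  rintro a -
  obtain ⟨p, hp⟩ := Ideal.Quotient.mkₐ_surjective ℤ _ (a : Rq n)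
  have heval : p.eval 1 = 0 := by
    have h2 : evalOne n (a : Rq n) = 0 := LinearMap.mem_ker.mp a.2
    have h4 : evalOne n (mkR n p) = 0 := by
      show evalOne n ((Ideal.Quotient.mkₐ ℤ _) p) = 0
      rw [hp]; exact h2
    rwa [evalOne_mk] at h4
  have key : (a : Rq n) = ∑ i ∈ p.support, p.coeff i • eR n ((i : ZMod n)) := by
    have h3 : ∀ i : ℕ, eR n ((i : ZMod n)) = mkR n (X ^ i) - 1 := eR_natCast n hn
    calc (a : Rq n) = mkR n p := hp.symm
    _ = ∑ i ∈ p.support, p.coeff i • mkR n (X ^ i) := mk_as_sum n p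
    _ = ∑ i ∈ p.support, p.coeff i • (eR n ((i : ZMod n)) + 1) := by
      apply Finset.sum_congr rfl; intro i _; rw [h3 i, sub_add_cancel]
    _ = (∑ i ∈ p.support, p.coeff i • eR n ((i : ZMod n))) +
        (∑ i ∈ p.support, p.coeff i) • (1 : Rq n) := by
      rw [Finset.sum_smul]
      rw [← Finset.sum_add_distrib]
      apply Finset.sum_congr rfl; intro i _; rw [smul_add]
    _ = ∑ i ∈ p.support, p.coeff i • eR n ((i : ZMod n)) := by
      rw [← eval_one_eq_sum n p, heval, zero_smul, add_zero]
  have ha : a = ∑ i ∈ p.support, p.coeff i • eZ n ((i : ZMod n)) := by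
    apply Subtype.ext
    rw [key]
    simp [eZ]
  rw [ha]
  exact Submodule.sum_mem _ fun i _ =>
    Submodule.smul_mem _ _ (Submodule.subset_span ⟨_, rfl⟩)

lemma span_sigma (n d : ℕ) (hn : 1 ≤ n) :
    Submodule.span ℤ (Set.range fun v : ZMod n =>
      (Submodule.Quotient.mk (eZ n v) : SigmaGrp n d)) = ⊤ := by
  rw [eq_top_iff]
  rintro x -
  obtain ⟨a, rfl⟩ := Submodule.Quotient.mk_surjective _ x
  have ha : a ∈ Submodule.span ℤ (Set.range (eZ n)) := by rw [span_eZ n hn]; trivial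
  have h2 := Submodule.mem_map_of_mem
    (f := ((Esub n d).comap (Znd n).subtype).mkQ) ha
  rw [Submodule.map_span] at h2
  refine Submodule.span_mono ?_ h2
  rintro y ⟨z, ⟨v, rfl⟩, rfl⟩
  exact ⟨v, rfl⟩

end SandDune
set_option maxHeartbeats 2000000 in
set_option synthInstance.maxHeartbeats 1000000 in
/-- Theorem: `d·Σ(n,d) ≅ Σ(n/gcd(n,d), d)`. -/
theorem smul_sand_dune (n d : ℕ) (hn : 1 ≤ n) (hd : 2 ≤ d) :
    Nonempty
      ((LinearMap.range ((d : ℤ) • (LinearMap.id : SigmaGrp n d →ₗ[ℤ] SigmaGrp n d))) ≃+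
        SigmaGrp (n / Nat.gcd n d) d) := by
  classical
  open SandDune in
  set g := Nat.gcd n d with hgdef
  set n' := n / g with hn'def
  have hg : 1 ≤ g := Nat.gcd_pos_of_pos_left d (by omega)
  have hgdn : g ∣ n := Nat.gcd_dvd_left n d
  have hgd : g ∣ d := Nat.gcd_dvd_right n d
  have hgn : g * n' = n := Nat.mul_div_cancel' hgdn
  have hn' : 1 ≤ n' := Nat.div_pos (Nat.le_of_dvd (by omega) hgdn) hg
  have hn'len : n' ≤ n := by
    have h0 : n' ≤ g * n' := Nat.le_mul_of_pos_left n' (by omega)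
    omega
  haveI : NeZero n := ⟨by omega⟩
  haveI : NeZero n' := ⟨by omega⟩
  set m := d / g with hmdef
  have hm : g * m = d := Nat.mul_div_cancel' hgd
  have hco : Nat.Coprime m n' :=
    Nat.Coprime.symm (Nat.coprime_div_gcd_div_gcd (Nat.gcd_pos_of_pos_left d (by omega)))
  set P := (Esub n d).comap (Znd n).subtype with hP
  set P' := (Esub n' d).comap (Znd n').subtype with hP'
  have hle : P' ≤ P.comap (PhiZ n n' g hn hgn) := by
    intro a ha
    have ha' : (a : Rq n') ∈ Esub n' d := ha
    have h2 : Phi n n' g hn hgn (a : Rq n') ∈ Esub n d :=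
      Phi_Esub_le n n' g d hn hn' hgn _ ha'
    exact h2
  set psibar := Submodule.mapQ P' P (PhiZ n n' g hn hgn) hle with hpsibar
  have hinj : Function.Injective psibar := by
    rw [← LinearMap.ker_eq_bot, eq_bot_iff]
    rintro x hx
    obtain ⟨a, rfl⟩ := Submodule.Quotient.mk_surjective _ x
    rw [LinearMap.mem_ker, hpsibar, Submodule.mapQ_apply, Submodule.Quotient.mk_eq_zero] at hx
    have hx' : Phi n n' g hn hgn (a : Rq n') ∈ Esub n d := hx
    have hmem : (a : Rq n') ∈ Esub n' d :=
      preimage_Esub n n' g d hn hn' hg (by omega) hgn hgd _ hx'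
    rw [Submodule.mem_bot]
    exact (Submodule.Quotient.mk_eq_zero _).mpr hmem
  -- basic computations
  have hD : ∀ v : ZMod n, ((d : ℤ) • (Submodule.Quotient.mk (eZ n v) : SigmaGrp n d)) =
      Submodule.Quotient.mk (eZ n ((d : ZMod n) * v)) := by
    intro v
    rw [← Submodule.Quotient.mk_smul, Submodule.Quotient.eq]
    have hval : (((d : ℤ) • eZ n v - eZ n ((d : ZMod n) * v) : Znd n) : Rq n) = epsR n d v := rfl
    show (((d : ℤ) • eZ n v - eZ n ((d : ZMod n) * v) : Znd n) : Rq n) ∈ Esub n d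
    rw [hval]
    exact epsR_mem n d v
  have hPhiZe : ∀ w : ZMod n', PhiZ n n' g hn hgn (eZ n' w) =
      eZ n (((g * w.val : ℕ) : ZMod n)) := by
    intro w
    apply Subtype.ext
    rw [PhiZ_coe]
    exact Phi_eRw n n' g hn hn' hgn w
  have hpsi_e : ∀ w : ZMod n', psibar (Submodule.Quotient.mk (eZ n' w)) =
      Submodule.Quotient.mk (eZ n (((g * w.val : ℕ) : ZMod n))) := by
    intro w
    rw [hpsibar, Submodule.mapQ_apply, hPhiZe w]
  have hdv : ∀ v : ZMod n, (d : ZMod n) * v = ((d * v.val : ℕ) : ZMod n) := by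
    intro v
    have hv : (((v.val : ℕ)) : ZMod n) = v := ZMod.natCast_rightInverse v
    rw [← hv, ← Nat.cast_mul, hv]
  have hmod : ∀ a : ℕ, (g * ((m * a) % n') : ℕ) ≡ (d * a) [MOD n] := by
    intro a
    have h1 : (m * a) % n' ≡ m * a [MOD n'] := Nat.mod_modEq _ _
    have h2 := h1.mul_left' (c := g)
    rw [hgn] at h2
    have h3 : g * (m * a) = d * a := by rw [← hm]; ring
    rwa [h3] at h2
  set Dmap := ((d : ℤ) • (LinearMap.id : SigmaGrp n d →ₗ[ℤ] SigmaGrp n d)) with hDmap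
  have hgen_D : ∀ v : ZMod n,
      Dmap (Submodule.Quotient.mk (eZ n v)) ∈ LinearMap.range psibar := by
    intro v
    have h1 : Dmap (Submodule.Quotient.mk (eZ n v)) =
        Submodule.Quotient.mk (eZ n ((d : ZMod n) * v)) := by
      show (d : ℤ) • (Submodule.Quotient.mk (eZ n v) : SigmaGrp n d) = _
      exact hD v
    set w : ZMod n' := ((m * v.val : ℕ) : ZMod n') with hw
    have hwval : w.val = (m * v.val) % n' := ZMod.val_natCast _ _
    have heq : ((g * w.val : ℕ) : ZMod n) = ((d * v.val : ℕ) : ZMod n) := by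
      rw [hwval]
      exact (ZMod.natCast_eq_natCast_iff _ _ _).mpr (hmod v.val)
    refine ⟨Submodule.Quotient.mk (eZ n' w), ?_⟩
    rw [hpsi_e w, heq, ← hdv v, h1]
  have hgen_psi : ∀ w : ZMod n',
      psibar (Submodule.Quotient.mk (eZ n' w)) ∈ LinearMap.range Dmap := by
    intro w
    set k : ZMod n' := ((m : ZMod n'))⁻¹ * ((w.val : ℕ) : ZMod n') with hk
    have hmk : (m : ZMod n') * k = ((w.val : ℕ) : ZMod n') := by
      rw [hk, ← mul_assoc, ZMod.coe_mul_inv_eq_one m hco, one_mul]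
    have h1 : (m * k.val) % n' = w.val := by
      have h0 : ((m * k.val : ℕ) : ZMod n') = ((w.val : ℕ) : ZMod n') := by
        rw [Nat.cast_mul, (ZMod.natCast_rightInverse k : (((k.val : ℕ)) : ZMod n') = k)]
        exact hmk
      have h2 := (ZMod.natCast_eq_natCast_iff _ _ _).mp h0
      rwa [Nat.ModEq, Nat.mod_eq_of_lt (ZMod.val_lt w)] at h2
    have h3 : ((d * k.val : ℕ) : ZMod n) = ((g * w.val : ℕ) : ZMod n) := by
      have h4 := (hmod k.val).symm
      rw [h1] at h4
      exact (ZMod.natCast_eq_natCast_iff _ _ _).mpr h4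
    have hkval : (((k.val : ℕ) : ZMod n)).val = k.val := by
      rw [ZMod.val_natCast]
      exact Nat.mod_eq_of_lt (lt_of_lt_of_le (ZMod.val_lt k) hn'len)
    have h5 : (d : ZMod n) * ((k.val : ℕ) : ZMod n) = ((g * w.val : ℕ) : ZMod n) := by
      rw [hdv, hkval, h3]
    refine ⟨Submodule.Quotient.mk (eZ n ((k.val : ℕ) : ZMod n)), ?_⟩
    have h6 : Dmap (Submodule.Quotient.mk (eZ n ((k.val : ℕ) : ZMod n))) =
        Submodule.Quotient.mk (eZ n ((d : ZMod n) * ((k.val : ℕ) : ZMod n))) := by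
      show (d : ℤ) • (Submodule.Quotient.mk (eZ n ((k.val : ℕ) : ZMod n)) : SigmaGrp n d) = _
      exact hD _
    rw [h6, h5, hpsi_e w]
  have hrange : LinearMap.range psibar = LinearMap.range Dmap := by
    apply le_antisymm
    · rw [LinearMap.range_eq_map, ← span_sigma n' d hn', Submodule.map_span, Submodule.span_le]
      rintro y ⟨x, ⟨w, rfl⟩, rfl⟩
      exact hgen_psi w
    · rw [LinearMap.range_eq_map, ← span_sigma n d hn, Submodule.map_span, Submodule.span_le]
      rintro y ⟨x, ⟨v, rfl⟩, rfl⟩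
      exact hgen_D v
  refine ⟨?_⟩
  have e1 : SigmaGrp n' d ≃ₗ[ℤ] LinearMap.range psibar := LinearEquiv.ofInjective psibar hinj
  exact ((LinearEquiv.ofEq _ _ hrange.symm).trans e1.symm).toAddEquiv
end
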